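/- arXiv:1011.2288 — 5 statements merged into one kernel-verified Lean document; each statement's English description precedes it below -/
import Mathlib

section
/- With d₂ as in the two-sample squared-distance statistic, d₂(A,B) = 2·SST, where SST = n₁(ā − c̄)² + n₂(b̄ − c̄)² and c̄ = (n₁ā + n₂b̄)/(n₁+n₂). That is, the d₂-distance between two univariate samples equals twice the ANOVA between-group sum of squares. -/
open Finset

lemma cross_sum_sq {p q : ℕ} (f : Fin p → ℝ) (g : Fin q → ℝ) :
    ∑ i : Fin p, ∑ m : Fin q, (f i - g m) ^ 2
      = (q : ℝ) * ∑ i, (f i) ^ 2 + (p : ℝ) * ∑ m, (g m) ^ 2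
        - 2 * (∑ i, f i) * (∑ m, g m) := by
  simp only [sub_sq, Finset.sum_add_distrib, Finset.sum_sub_distrib,
    Finset.sum_const, Finset.card_univ, Fintype.card_fin, nsmul_eq_mul,
    ← Finset.mul_sum, ← Finset.sum_mul]
  ring

/-- The `d₂` distance between two univariate samples equals twice the ANOVA
between-group sum of squares `SST = n₁(ā − c̄)² + n₂(b̄ − c̄)²`. -/
theorem d2_eq_two_SST
    (n₁ n₂ : ℕ) (hn₁ : 1 ≤ n₁) (hn₂ : 1 ≤ n₂)
    (a : Fin n₁ → ℝ) (b : Fin n₂ → ℝ) :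
    ((n₁ : ℝ) * n₂ / ((n₁ : ℝ) + n₂)) *
        (2 * ((1 / ((n₁ : ℝ) * n₂)) * ∑ i : Fin n₁, ∑ m : Fin n₂, (a i - b m) ^ 2)
          - (1 / ((n₁ : ℝ) * n₁)) * ∑ i : Fin n₁, ∑ i' : Fin n₁, (a i - a i') ^ 2
          - (1 / ((n₂ : ℝ) * n₂)) * ∑ m : Fin n₂, ∑ m' : Fin n₂, (b m - b m') ^ 2)
      = 2 * ((n₁ : ℝ) * ((∑ i : Fin n₁, a i) / n₁
              - ((n₁ : ℝ) * ((∑ i : Fin n₁, a i) / n₁)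
                  + (n₂ : ℝ) * ((∑ m : Fin n₂, b m) / n₂)) / ((n₁ : ℝ) + n₂)) ^ 2
            + (n₂ : ℝ) * ((∑ m : Fin n₂, b m) / n₂
              - ((n₁ : ℝ) * ((∑ i : Fin n₁, a i) / n₁)
                  + (n₂ : ℝ) * ((∑ m : Fin n₂, b m) / n₂)) / ((n₁ : ℝ) + n₂)) ^ 2) := by
  have h1 : (0:ℝ) < n₁ := by exact_mod_cast hn₁
  have h2 : (0:ℝ) < n₂ := by exact_mod_cast hn₂
  rw [cross_sum_sq a b, cross_sum_sq a a, cross_sum_sq b b]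
  field_simp
  ring
end

section
/- Let A₁,…,A_K be finite families of points in ℝ^p with sizes n₁,…,n_K and N = Σ n_j, and fix α ∈ (0,2]. With g_α(A_j,A_k) = (1/(n_j n_k)) Σ_{x∈A_j} Σ_{y∈A_k} ‖x−y‖^α, define T_α = (N/2)·g_α(A,A) for the pooled family A, W_α = Σ_j (n_j/2) g_α(A_j,A_j), and S_α = Σ_{j<k} (n_j n_k/(2N)) (2g_α(A_j,A_k) − g_α(A_j,A_j) − g_α(A_k,A_k)). Then T_α = S_α + W_α. -/
open Finset

/-- The Gini mean of `α`-powered Euclidean distances between two finite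
families of points. -/
noncomputable def giniMean {p : ℕ} {ι κ : Type*} [Fintype ι] [Fintype κ] (α : ℝ)
    (A : ι → EuclideanSpace ℝ (Fin p)) (B : κ → EuclideanSpace ℝ (Fin p)) : ℝ :=
  (1 / ((Fintype.card ι : ℝ) * (Fintype.card κ : ℝ))) *
    ∑ i : ι, ∑ m : κ, ‖A i - B m‖ ^ α

private lemma sum_ite_lt_symm {K : ℕ} (f : Fin K → Fin K → ℝ)
    (hf : ∀ j k, f j k = f k j) :
    ∑ j : Fin K, ∑ k : Fin K, (if j < k then f j k else 0)
      = (1/2) * ((∑ j : Fin K, ∑ k : Fin K, f j k) - ∑ j : Fin K, f j j) := by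
  have hsplit : ∀ j k : Fin K, f j k
      = (if j < k then f j k else 0) + (if k < j then f j k else 0)
        + (if j = k then f j k else 0) := by
    intro j k
    rcases lt_trichotomy j k with h | h | h
    · simp [h, asymm h, h.ne]
    · simp [h, lt_irrefl]
    · simp [h, asymm h, h.ne']
  have h2 : ∑ j : Fin K, ∑ k : Fin K, f j k
      = (∑ j : Fin K, ∑ k : Fin K, (if j < k then f j k else 0))
        + (∑ j : Fin K, ∑ k : Fin K, (if k < j then f j k else 0))
        + (∑ j : Fin K, ∑ k : Fin K, (if j = k then f j k else 0)) := by
    calc ∑ j : Fin K, ∑ k : Fin K, f j k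
        = ∑ j : Fin K, ∑ k : Fin K, ((if j < k then f j k else 0)
            + (if k < j then f j k else 0) + (if j = k then f j k else 0)) :=
          Finset.sum_congr rfl fun j _ => Finset.sum_congr rfl fun k _ => hsplit j k
      _ = _ := by simp [Finset.sum_add_distrib]
  have h3 : ∑ j : Fin K, ∑ k : Fin K, (if k < j then f j k else 0)
      = ∑ j : Fin K, ∑ k : Fin K, (if j < k then f j k else 0) := by
    rw [Finset.sum_comm]
    exact Finset.sum_congr rfl fun j _ => Finset.sum_congr rfl fun k _ => by
      rw [hf]
  have h4 : ∑ j : Fin K, ∑ k : Fin K, (if j = k then f j k else 0)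
      = ∑ j : Fin K, f j j := by
    refine Finset.sum_congr rfl fun j _ => ?_
    simp
  rw [h3, h4] at h2
  linarith

private lemma aux_f (a b N x y z : ℝ) (ha : a ≠ 0) (hb : b ≠ 0) (hN : N ≠ 0) :
    (a*b/(2*N)) * (2*(x/(a*b)) - y/(a*a) - z/(b*b))
      = (1/N)*x - b*(y/a)/(2*N) - a*(z/b)/(2*N) := by
  field_simp

/-- DISCO decomposition: total dispersion equals between-sample plus
within-sample dispersion, `T_α = S_α + W_α`, for every index `0 < α ≤ 2`. -/
theorem disco_decomposition
    (p K : ℕ) (α : ℝ) (hα0 : 0 < α) (hα2 : α ≤ 2)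
    (n : Fin K → ℕ) (hn : ∀ j, 1 ≤ n j)
    (A : (j : Fin K) → Fin (n j) → EuclideanSpace ℝ (Fin p)) :
    ((∑ j : Fin K, (n j : ℝ)) / 2) *
        giniMean α (fun ji : Σ j : Fin K, Fin (n j) => A ji.1 ji.2)
          (fun ji : Σ j : Fin K, Fin (n j) => A ji.1 ji.2)
      = (∑ j : Fin K, ∑ k : Fin K,
          if j < k then
            ((n j : ℝ) * (n k : ℝ) / (2 * ∑ l : Fin K, (n l : ℝ))) *
              (2 * giniMean α (A j) (A k) - giniMean α (A j) (A j)
                - giniMean α (A k) (A k))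
          else 0)
        + ∑ j : Fin K, ((n j : ℝ) / 2) * giniMean α (A j) (A j) := by
  classical
  rcases Nat.eq_zero_or_pos K with hK | hK
  · subst hK
    simp [giniMean]
  have hne : Nonempty (Fin K) := Fin.pos_iff_nonempty.mp hK
  obtain ⟨D, hD⟩ : ∃ D : Fin K → Fin K → ℝ, ∀ j k,
      D j k = ∑ i, ∑ m, ‖A j i - A k m‖ ^ α := ⟨_, fun _ _ => rfl⟩
  have hDsymm : ∀ j k, D j k = D k j := by
    intro j k
    rw [hD, hD, Finset.sum_comm]
    exact Finset.sum_congr rfl fun m _ => Finset.sum_congr rfl fun i _ => by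
      rw [norm_sub_rev]
  have hn' : ∀ j, (n j : ℝ) ≠ 0 := fun j =>
    Nat.cast_ne_zero.mpr (Nat.one_le_iff_ne_zero.mp (hn j))
  obtain ⟨N, hNdef⟩ : ∃ N : ℝ, N = ∑ j : Fin K, (n j : ℝ) := ⟨_, rfl⟩
  have hN : 0 < N := hNdef ▸ Finset.sum_pos
    (fun j _ => by exact_mod_cast hn j) Finset.univ_nonempty
  have hNne : N ≠ 0 := ne_of_gt hN
  have hg : ∀ j k, giniMean α (A j) (A k) = D j k / ((n j : ℝ) * (n k : ℝ)) := by
    intro j k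
    rw [giniMean, hD]
    simp only [Fintype.card_fin]
    ring
  have hpool : giniMean α (fun ji : Σ j : Fin K, Fin (n j) => A ji.1 ji.2)
      (fun ji : Σ j : Fin K, Fin (n j) => A ji.1 ji.2)
      = (1/(N*N)) * ∑ j, ∑ k, D j k := by
    rw [giniMean]
    congr 1
    · rw [Fintype.card_sigma]
      simp [hNdef]
    · have h1 : (∑ ji : Σ j : Fin K, Fin (n j), ∑ km : Σ k : Fin K, Fin (n k),
          ‖A ji.1 ji.2 - A km.1 km.2‖ ^ α)
          = ∑ j : Fin K, ∑ i : Fin (n j), ∑ k : Fin K, ∑ m : Fin (n k),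
              ‖A j i - A k m‖ ^ α := by
        simp only [← Finset.univ_sigma_univ, Finset.sum_sigma]
      rw [h1]
      refine Finset.sum_congr rfl fun j _ => ?_
      rw [Finset.sum_comm]
      exact Finset.sum_congr rfl fun k _ => (hD j k).symm
  rw [hpool, ← hNdef]
  simp only [hg]
  obtain ⟨f, hfdef⟩ : ∃ f : Fin K → Fin K → ℝ, ∀ j k, f j k =
      ((n j : ℝ) * (n k : ℝ) / (2 * N)) *
        (2 * (D j k / ((n j : ℝ) * (n k : ℝ))) - D j j / ((n j : ℝ) * (n j : ℝ))
          - D k k / ((n k : ℝ) * (n k : ℝ))) := ⟨_, fun _ _ => rfl⟩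
  have hgoalif : (∑ j : Fin K, ∑ k : Fin K,
      if j < k then ((n j : ℝ) * (n k : ℝ) / (2 * N)) *
        (2 * (D j k / ((n j : ℝ) * (n k : ℝ))) - D j j / ((n j : ℝ) * (n j : ℝ))
          - D k k / ((n k : ℝ) * (n k : ℝ))) else 0)
      = ∑ j : Fin K, ∑ k : Fin K, if j < k then f j k else 0 := by
    refine Finset.sum_congr rfl fun j _ => Finset.sum_congr rfl fun k _ => ?_
    rw [hfdef]
  rw [hgoalif]
  have hfsymm : ∀ j k, f j k = f k j := by
    intro j k
    rw [hfdef, hfdef, hDsymm k j]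
    ring
  have hkey := sum_ite_lt_symm f hfsymm
  have hdiagsum : ∑ j, f j j = 0 := by
    refine Finset.sum_eq_zero fun j _ => ?_
    rw [hfdef]
    ring
  have hc : ∀ x : ℝ, N * x / (2*N) = x / 2 := fun x => by
    rw [mul_comm 2 N, ← div_div, mul_div_cancel_left₀ _ hNne]
  have hf2 : ∀ j k, f j k = (1/N) * D j k
      - (n k : ℝ) * (D j j / (n j : ℝ)) / (2*N)
      - (n j : ℝ) * (D k k / (n k : ℝ)) / (2*N) := by
    intro j k
    rw [hfdef]
    exact aux_f _ _ _ _ _ _ (hn' j) (hn' k) hNne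
  have hsum2 : ∀ j, ∑ k, (n k : ℝ) * (D j j / (n j : ℝ)) / (2*N)
      = (D j j / (n j : ℝ)) / 2 := by
    intro j
    rw [← Finset.sum_div, ← Finset.sum_mul, ← hNdef, hc]
  have hsum3 : ∀ j, ∑ k, (n j : ℝ) * (D k k / (n k : ℝ)) / (2*N)
      = (n j : ℝ) * (∑ k, D k k / (n k : ℝ)) / (2*N) := by
    intro j
    rw [← Finset.sum_div, ← Finset.mul_sum]
  have hsum3' : ∑ j, (n j : ℝ) * (∑ k, D k k / (n k : ℝ)) / (2*N)
      = (∑ k, D k k / (n k : ℝ)) / 2 := by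
    rw [← Finset.sum_div, ← Finset.sum_mul, ← hNdef, hc]
  have hff : ∑ j, ∑ k, f j k = (1/N) * (∑ j, ∑ k, D j k)
      - (∑ j, D j j / (n j : ℝ)) / 2 - (∑ j, D j j / (n j : ℝ)) / 2 := by
    calc ∑ j, ∑ k, f j k
        = ∑ j, ∑ k, ((1/N) * D j k - (n k : ℝ) * (D j j / (n j : ℝ)) / (2*N)
            - (n j : ℝ) * (D k k / (n k : ℝ)) / (2*N)) :=
          Finset.sum_congr rfl fun j _ => Finset.sum_congr rfl fun k _ => hf2 j k
      _ = ∑ j, ((∑ k, (1/N) * D j k) - (D j j / (n j : ℝ)) / 2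
            - (n j : ℝ) * (∑ k, D k k / (n k : ℝ)) / (2*N)) := by
          refine Finset.sum_congr rfl fun j _ => ?_
          rw [Finset.sum_sub_distrib, Finset.sum_sub_distrib, hsum2 j, hsum3 j]
      _ = (∑ j, ∑ k, (1/N) * D j k) - (∑ j, (D j j / (n j : ℝ)) / 2)
            - ∑ j, (n j : ℝ) * (∑ k, D k k / (n k : ℝ)) / (2*N) := by
          rw [Finset.sum_sub_distrib, Finset.sum_sub_distrib]
      _ = _ := by
          rw [hsum3']
          congr 1
          congr 1
          · simp [Finset.mul_sum]
          · exact (Finset.sum_div _ _ _).symm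
  have hW : ∑ j, ((n j : ℝ) / 2) * (D j j / ((n j : ℝ) * (n j : ℝ)))
      = (∑ j, D j j / (n j : ℝ)) / 2 := by
    rw [Finset.sum_div]
    refine Finset.sum_congr rfl fun j _ => ?_
    field_simp [hn' j]
  rw [hkey, hW, hff, hdiagsum]
  field_simp
  ring
end

section
/- In the balanced case where all K samples have common size n (so N = Kn), the between-sample dispersion simplifies: T_α − (1/K) Σ_{j<k} (n/2)(2g_α(A_j,A_k) − g_α(A_j,A_j) − g_α(A_k,A_k)) = Σ_j (n/2) g_α(A_j,A_j). That is, T_α − S_α = W_α for the balanced design. -/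
open Finset

/-- Balanced-design DISCO decomposition: with `K` samples of common size `n`,
`T_α − S_α = W_α` where `S_α = (1/K) Σ_{j<k} (n/2)(2g_{jk} − g_{jj} − g_{kk})`. -/
theorem disco_balanced_decomposition
    (p K n : ℕ) (α : ℝ) (hα0 : 0 < α) (hα2 : α ≤ 2) (hn : 1 ≤ n)
    (A : Fin K → Fin n → EuclideanSpace ℝ (Fin p)) :
    ((K * n : ℕ) : ℝ) / 2 *
        giniMean α (fun ji : Fin K × Fin n => A ji.1 ji.2)
          (fun ji : Fin K × Fin n => A ji.1 ji.2)
      - (1 / (K : ℝ)) * ∑ j : Fin K, ∑ k : Fin K,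
          (if j < k then
            ((n : ℝ) / 2) *
              (2 * giniMean α (A j) (A k) - giniMean α (A j) (A j)
                - giniMean α (A k) (A k))
          else 0)
      = ∑ j : Fin K, ((n : ℝ) / 2) * giniMean α (A j) (A j) := by
  rcases Nat.eq_zero_or_pos K with hK | hK
  · subst hK
    simp [giniMean]
  have hK0 : (0:ℝ) < K := by exact_mod_cast hK
  have hn0 : (0:ℝ) < n := by exact_mod_cast hn
  have hKne : (K:ℝ) ≠ 0 := ne_of_gt hK0
  have hnne : (n:ℝ) ≠ 0 := ne_of_gt hn0
  set g : Fin K → Fin K → ℝ := fun j k => giniMean α (A j) (A k) with hg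
  have gsymm : ∀ j k, g j k = g k j := by
    intro j k
    simp only [hg, giniMean, mul_comm]
    rw [Finset.sum_comm]
    congr 1
    refine Finset.sum_congr rfl fun i _ => Finset.sum_congr rfl fun m _ => ?_
    rw [norm_sub_rev]
  -- pooled gini in terms of g
  have hpool : giniMean α (fun ji : Fin K × Fin n => A ji.1 ji.2)
      (fun ji : Fin K × Fin n => A ji.1 ji.2)
      = (1 / ((K:ℝ)*(K:ℝ))) * ∑ j : Fin K, ∑ k : Fin K, g j k := by
    simp only [hg, giniMean, Fintype.card_prod, Fintype.card_fin,
      Fintype.sum_prod_type, Finset.mul_sum]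
    refine Finset.sum_congr rfl fun j _ => ?_
    rw [Finset.sum_comm]
    refine Finset.sum_congr rfl fun k _ => Finset.sum_congr rfl fun i _ =>
      Finset.sum_congr rfl fun m _ => ?_
    push_cast
    simp only [one_div, mul_inv]
    ring
  set c : Fin K → Fin K → ℝ :=
    fun j k => (n:ℝ)/2 * (2 * g j k - g j j - g k k) with hc
  have csymm : ∀ j k, c j k = c k j := by
    intro j k; simp only [hc]; rw [gsymm j k]; ring
  have hswap : (∑ j : Fin K, ∑ k : Fin K, if j < k then c j k else 0)
      = ∑ j : Fin K, ∑ k : Fin K, if k < j then c j k else 0 := by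
    rw [Finset.sum_comm]
    exact Finset.sum_congr rfl fun j _ => Finset.sum_congr rfl fun k _ => by
      rw [csymm]
  have htri : ∀ j k : Fin K, c j k
      = (if j < k then c j k else 0) + (if k < j then c j k else 0) := by
    intro j k
    rcases lt_trichotomy j k with h | h | h
    · simp [h, not_lt_of_gt h]
    · subst h
      simp only [lt_irrefl, if_false, add_zero, hc]; ring
    · simp [h, not_lt_of_gt h]
  have hdouble : (∑ j : Fin K, ∑ k : Fin K, if j < k then c j k else 0) * 2
      = ∑ j : Fin K, ∑ k : Fin K, c j k := by
    rw [mul_two]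
    nth_rewrite 2 [hswap]
    rw [← Finset.sum_add_distrib]
    exact Finset.sum_congr rfl fun j _ => by
      rw [← Finset.sum_add_distrib]
      exact Finset.sum_congr rfl fun k _ => (htri j k).symm
  have hcval : (∑ j : Fin K, ∑ k : Fin K, c j k)
      = (n:ℝ) * (∑ j : Fin K, ∑ k : Fin K, g j k) - (n:ℝ) * K * (∑ j : Fin K, g j j) := by
    simp only [hc, mul_sub, Finset.sum_sub_distrib, ← Finset.mul_sum,
      Finset.sum_const, Finset.card_univ, Fintype.card_fin, nsmul_eq_mul]
    ring
  rw [hpool]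
  have hfin : (∑ j : Fin K, ∑ k : Fin K, if j < k then c j k else 0)
      = ((n:ℝ) * (∑ j : Fin K, ∑ k : Fin K, g j k)
        - (n:ℝ) * K * (∑ j : Fin K, g j j)) / 2 := by
    rw [← hcval, ← hdouble]; ring
  show _ - (1/(K:ℝ)) * (∑ j : Fin K, ∑ k : Fin K, if j < k then c j k else 0) = _
  rw [hfin, show (∑ j : Fin K, ((n:ℝ)/2) * g j j) = (n:ℝ)/2 * ∑ j : Fin K, g j j
      from (Finset.mul_sum _ _ _).symm]
  push_cast
  field_simp
  ring
end

section
/- For K finite families A₁,…,A_K of points in ℝ^p and 0 < α ≤ 2, the between-sample dispersion S_α(A₁,…,A_K) = Σ_{j<k} (n_j n_k/(2N)) (2g_α(A_j,A_k) − g_α(A_j,A_j) − g_α(A_k,A_k)) is nonnegative. -/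
section Aux1
open Finset Nat

lemma inner_pow_pd {p : ℕ} {ι : Type*} [Fintype ι] (x : ι → EuclideanSpace ℝ (Fin p))
    (e : ι → ℝ) (m : ℕ) :
    0 ≤ ∑ i, ∑ j, e i * e j * (inner ℝ (x i) (x j) : ℝ) ^ m := by
  have hinner : ∀ i j, (inner ℝ (x i) (x j) : ℝ) = ∑ a, x i a * x j a := by
    intro i j
    simp [PiLp.inner_apply, RCLike.inner_apply, mul_comm]
  have key : ∀ i j : ι, (inner ℝ (x i) (x j) : ℝ) ^ m
      = ∑ g : Fin m → Fin p, (∏ l, x i (g l)) * (∏ l, x j (g l)) := by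
    intro i j
    rw [hinner, Fintype.sum_pow]
    exact Finset.sum_congr rfl fun g _ => by rw [← Finset.prod_mul_distrib]
  calc (0:ℝ) ≤ ∑ g : Fin m → Fin p, (∑ i, e i * ∏ l, x i (g l)) ^ 2 :=
        Finset.sum_nonneg fun g _ => sq_nonneg _
    _ = ∑ i, ∑ j, e i * e j * (inner ℝ (x i) (x j) : ℝ) ^ m := by
        simp_rw [key, Finset.mul_sum, sq, Finset.sum_mul_sum]
        rw [Finset.sum_comm]
        refine Finset.sum_congr rfl fun i _ => ?_
        rw [Finset.sum_comm]
        exact Finset.sum_congr rfl fun j _ => Finset.sum_congr rfl fun g _ => by ring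

lemma gaussian_pd {p : ℕ} {ι : Type*} [Fintype ι] (x : ι → EuclideanSpace ℝ (Fin p))
    (d : ι → ℝ) {t : ℝ} (ht : 0 ≤ t) :
    0 ≤ ∑ i, ∑ j, d i * d j * Real.exp (-(t * ‖x i - x j‖ ^ 2)) := by
  set e : ι → ℝ := fun i => d i * Real.exp (-(t * ‖x i‖ ^ 2)) with he
  have key : ∀ i j, d i * d j * Real.exp (-(t * ‖x i - x j‖ ^ 2))
      = e i * e j * Real.exp (2 * t * (inner ℝ (x i) (x j) : ℝ)) := by
    intro i j
    have h1 : Real.exp (-(t * ‖x i - x j‖ ^ 2))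
        = Real.exp (-(t * ‖x i‖ ^ 2)) * Real.exp (-(t * ‖x j‖ ^ 2))
          * Real.exp (2 * t * (inner ℝ (x i) (x j) : ℝ)) := by
      rw [← Real.exp_add, ← Real.exp_add, @norm_sub_sq_real]
      congr 1
      ring
    rw [h1, he]
    ring
  have hsum : ∀ i j : ι, Summable
      (fun m : ℕ => e i * e j * ((2 * t * (inner ℝ (x i) (x j) : ℝ)) ^ m / m !)) :=
    fun i j => (Real.summable_pow_div_factorial _).mul_left _
  have hexp : ∀ i j : ι, e i * e j * Real.exp (2 * t * (inner ℝ (x i) (x j) : ℝ))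
      = ∑' m : ℕ, e i * e j * ((2 * t * (inner ℝ (x i) (x j) : ℝ)) ^ m / m !) := by
    intro i j
    rw [tsum_mul_left, Real.exp_eq_exp_ℝ, NormedSpace.exp_eq_tsum_div]
  calc (0:ℝ)
      ≤ ∑' m : ℕ, ∑ i, ∑ j, e i * e j * ((2 * t * (inner ℝ (x i) (x j) : ℝ)) ^ m / m !) := by
        refine tsum_nonneg fun m => ?_
        have : ∑ i, ∑ j, e i * e j * ((2 * t * (inner ℝ (x i) (x j) : ℝ)) ^ m / m !)
            = ((2 * t) ^ m / m !) * ∑ i, ∑ j, e i * e j * (inner ℝ (x i) (x j) : ℝ) ^ m := by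
          rw [Finset.mul_sum]
          refine Finset.sum_congr rfl fun i _ => ?_
          rw [Finset.mul_sum]
          refine Finset.sum_congr rfl fun j _ => ?_
          rw [mul_pow]; ring
        rw [this]
        exact mul_nonneg (div_nonneg (pow_nonneg (by linarith) m) (by positivity))
          (inner_pow_pd x e m)
    _ = ∑ i, ∑ j, ∑' m : ℕ, e i * e j * ((2 * t * (inner ℝ (x i) (x j) : ℝ)) ^ m / m !) := by
        rw [Summable.tsum_finsetSum fun i _ => summable_sum fun j _ => hsum i j]
        exact Finset.sum_congr rfl fun i _ => Summable.tsum_finsetSum fun j _ => hsum i j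
    _ = ∑ i, ∑ j, d i * d j * Real.exp (-(t * ‖x i - x j‖ ^ 2)) := by
        refine Finset.sum_congr rfl fun i _ => Finset.sum_congr rfl fun j _ => ?_
        rw [key, hexp]

end Aux1

section Aux2
open MeasureTheory Set

lemma h_meas (b : ℝ) : Measurable (fun s : ℝ => (1 - Real.exp (-s)) * s ^ (-1 - b)) := by
  fun_prop

lemma h_integrable {b : ℝ} (hb0 : 0 < b) (hb1 : b < 1) :
    IntegrableOn (fun s : ℝ => (1 - Real.exp (-s)) * s ^ (-1 - b)) (Ioi 0) := by
  have hmeas := h_meas b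
  have h01 : IntegrableOn (fun s : ℝ => (1 - Real.exp (-s)) * s ^ (-1 - b)) (Ioo 0 1) := by
    have hint : IntegrableOn (fun s : ℝ => s ^ (-b)) (Ioo (0:ℝ) 1) :=
      (intervalIntegral.integrableOn_Ioo_rpow_iff one_pos).mpr (by linarith)
    refine Integrable.mono hint hmeas.aestronglyMeasurable.restrict ?_
    filter_upwards [ae_restrict_mem measurableSet_Ioo] with s hs
    have hs0 : 0 < s := hs.1
    have h1 : 0 ≤ 1 - Real.exp (-s) := by
      have := Real.exp_le_one_iff.mpr (by linarith : -s ≤ 0)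
      linarith
    have h2 : 1 - Real.exp (-s) ≤ s := by
      have := Real.add_one_le_exp (-s)
      linarith
    rw [Real.norm_eq_abs, Real.norm_eq_abs, abs_of_nonneg (mul_nonneg h1 (Real.rpow_nonneg hs0.le _)),
      abs_of_nonneg (Real.rpow_nonneg hs0.le _)]
    calc (1 - Real.exp (-s)) * s ^ (-1 - b) ≤ s * s ^ (-1 - b) :=
          mul_le_mul_of_nonneg_right h2 (Real.rpow_nonneg hs0.le _)
      _ = s ^ (-b) := by
          rw [← Real.rpow_one_add' hs0.le (by intro h; nlinarith)]
          congr 1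
          ring
  have h1i : IntegrableOn (fun s : ℝ => (1 - Real.exp (-s)) * s ^ (-1 - b)) (Ici 1) := by
    rw [integrableOn_Ici_iff_integrableOn_Ioi]
    have hint : IntegrableOn (fun s : ℝ => s ^ (-1 - b)) (Ioi (1:ℝ)) :=
      integrableOn_Ioi_rpow_of_lt (by linarith) one_pos
    refine Integrable.mono hint hmeas.aestronglyMeasurable.restrict ?_
    filter_upwards [ae_restrict_mem measurableSet_Ioi] with s hs
    have hs0 : (0:ℝ) < s := lt_trans one_pos hs
    have h1 : 0 ≤ 1 - Real.exp (-s) := by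
      have := Real.exp_le_one_iff.mpr (by linarith : -s ≤ 0)
      linarith
    rw [Real.norm_eq_abs, Real.norm_eq_abs, abs_of_nonneg (mul_nonneg h1 (Real.rpow_nonneg hs0.le _)),
      abs_of_nonneg (Real.rpow_nonneg hs0.le _)]
    nlinarith [Real.rpow_nonneg hs0.le (-1 - b), Real.exp_pos (-s)]
  have : Ioi (0:ℝ) = Ioo 0 1 ∪ Ici 1 := by
    ext s; simp only [mem_Ioi, mem_union, mem_Ioo, mem_Ici]
    constructor
    · intro h; by_cases h1 : s < 1 <;> [left; right] <;> [exact ⟨h, h1⟩; linarith]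
    · rintro (⟨h, _⟩ | h) <;> linarith
  rw [this]
  exact h01.union h1i

lemma h_integral_pos {b : ℝ} (hb0 : 0 < b) (hb1 : b < 1) :
    0 < ∫ s in Ioi (0:ℝ), (1 - Real.exp (-s)) * s ^ (-1 - b) := by
  have hnn : 0 ≤ᵐ[volume.restrict (Ioi (0:ℝ))]
      fun s : ℝ => (1 - Real.exp (-s)) * s ^ (-1 - b) := by
    filter_upwards [ae_restrict_mem measurableSet_Ioi] with s hs
    have : Real.exp (-s) < 1 := Real.exp_lt_one_iff.mpr (by linarith [mem_Ioi.mp hs])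
    exact mul_nonneg (by linarith) (Real.rpow_nonneg (le_of_lt hs) _)
  rw [setIntegral_pos_iff_support_of_nonneg_ae hnn (h_integrable hb0 hb1)]
  have hsub : Ioi (0:ℝ) ⊆ Function.support fun s : ℝ => (1 - Real.exp (-s)) * s ^ (-1 - b) := by
    intro s hs
    have hs0 : (0:ℝ) < s := hs
    have h1 : Real.exp (-s) < 1 := Real.exp_lt_one_iff.mpr (by linarith)
    have h2 : (0:ℝ) < s ^ (-1 - b) := Real.rpow_pos_of_pos hs0 _
    exact ne_of_gt (mul_pos (by linarith) h2)
  have : (Function.support fun s : ℝ => (1 - Real.exp (-s)) * s ^ (-1 - b)) ∩ Ioi 0 = Ioi 0 :=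
    inter_eq_self_of_subset_right hsub
  rw [this]
  simp

lemma J_integrable {b : ℝ} (hb0 : 0 < b) (hb1 : b < 1) {u : ℝ} (hu : 0 ≤ u) :
    IntegrableOn (fun t : ℝ => (1 - Real.exp (-(t * u))) * t ^ (-1 - b)) (Ioi 0) := by
  rcases eq_or_lt_of_le hu with h | h
  · have : (fun t : ℝ => (1 - Real.exp (-(t * u))) * t ^ (-1 - b)) = fun _ => (0:ℝ) := by
      ext t; rw [← h]; simp
    rw [this]
    exact (integrableOn_const_iff (C := (0:ℝ))).mpr (Or.inl (by simp))
  · have hcomp : IntegrableOn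
        (fun t : ℝ => (1 - Real.exp (-(t * u))) * (t * u) ^ (-1 - b)) (Ioi 0) := by
      have := (integrableOn_Ioi_comp_mul_right_iff
        (fun s : ℝ => (1 - Real.exp (-s)) * s ^ (-1 - b)) 0 h).mpr
        (by simpa using h_integrable hb0 hb1)
      simpa using this
    have h2 : IntegrableOn
        (fun t : ℝ => u ^ (1 + b) * ((1 - Real.exp (-(t * u))) * (t * u) ^ (-1 - b)))
        (Ioi 0) := hcomp.const_mul (u ^ (1 + b))
    refine IntegrableOn.congr_fun h2 (fun t ht => ?_) measurableSet_Ioi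
    have ht0 : (0:ℝ) < t := ht
    have h1 : u ^ (1 + b) * u ^ (-1 - b) = 1 := by
      rw [← Real.rpow_add h]
      norm_num
    rw [Real.mul_rpow ht0.le h.le,
      show u ^ (1 + b) * ((1 - Real.exp (-(t * u))) * (t ^ (-1 - b) * u ^ (-1 - b)))
          = (1 - Real.exp (-(t * u))) * t ^ (-1 - b) * (u ^ (1 + b) * u ^ (-1 - b)) from by ring,
      h1, mul_one]

lemma J_scale {b : ℝ} (hb0 : 0 < b) (hb1 : b < 1) {u : ℝ} (hu : 0 ≤ u) :
    ∫ t in Ioi (0:ℝ), (1 - Real.exp (-(t * u))) * t ^ (-1 - b)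
      = u ^ b * ∫ s in Ioi (0:ℝ), (1 - Real.exp (-s)) * s ^ (-1 - b) := by
  rcases eq_or_lt_of_le hu with h | h
  · rw [← h]
    simp [Real.zero_rpow hb0.ne']
  · have key : EqOn (fun t : ℝ => (1 - Real.exp (-(t * u))) * t ^ (-1 - b))
        (fun t : ℝ => u ^ (1 + b) * ((1 - Real.exp (-(t * u))) * (t * u) ^ (-1 - b)))
        (Ioi 0) := by
      intro t ht
      have ht0 : (0:ℝ) < t := ht
      have h1 : u ^ (1 + b) * u ^ (-1 - b) = 1 := by
        rw [← Real.rpow_add h]; norm_num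
      simp only
      rw [Real.mul_rpow ht0.le h.le]
      calc (1 - Real.exp (-(t * u))) * t ^ (-1 - b)
          = (1 - Real.exp (-(t * u))) * t ^ (-1 - b) * (u ^ (1 + b) * u ^ (-1 - b)) := by
            rw [h1, mul_one]
        _ = u ^ (1 + b) * ((1 - Real.exp (-(t * u))) * (t ^ (-1 - b) * u ^ (-1 - b))) := by ring
    rw [setIntegral_congr_fun measurableSet_Ioi key, integral_const_mul,
      integral_comp_mul_right_Ioi (fun s : ℝ => (1 - Real.exp (-s)) * s ^ (-1 - b)) 0 h]
    simp only [zero_mul, smul_eq_mul]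
    rw [← mul_assoc]
    congr 1
    rw [show (1:ℝ) + b = b + 1 by ring, Real.rpow_add h, Real.rpow_one]
    field_simp

end Aux2

section Aux3
open MeasureTheory Set Finset

/-- conditional negative definiteness of `‖x - y‖ ^ α` for `0 < α ≤ 2`. -/
lemma cnd_rpow {p : ℕ} {ι : Type*} [Fintype ι] {α : ℝ} (hα0 : 0 < α) (hα2 : α ≤ 2)
    (x : ι → EuclideanSpace ℝ (Fin p)) (c : ι → ℝ) (hc : ∑ i, c i = 0) :
    ∑ i, ∑ j, c i * c j * ‖x i - x j‖ ^ α ≤ 0 := by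
  rcases eq_or_lt_of_le hα2 with h2 | h2
  · -- α = 2
    subst h2
    have hr : ∀ i j : ι, ‖x i - x j‖ ^ (2:ℝ) = ‖x i‖ ^ 2 - 2 * (inner ℝ (x i) (x j) : ℝ) + ‖x j‖ ^ 2 := by
      intro i j
      rw [show (2:ℝ) = ((2:ℕ):ℝ) by norm_num, Real.rpow_natCast, @norm_sub_sq_real]
      norm_num
    have hinner : ∑ i, ∑ j, c i * c j * (inner ℝ (x i) (x j) : ℝ)
        = ‖∑ i, c i • x i‖ ^ 2 := by
      rw [← @real_inner_self_eq_norm_sq, sum_inner]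
      refine Finset.sum_congr rfl fun i _ => ?_
      rw [inner_sum]
      refine Finset.sum_congr rfl fun j _ => ?_
      rw [real_inner_smul_left, real_inner_smul_right]
      ring
    have expand : ∑ i, ∑ j, c i * c j * ‖x i - x j‖ ^ (2:ℝ)
        = (∑ i, c i * ‖x i‖ ^ 2) * (∑ j, c j) + (∑ i, c i) * (∑ j, c j * ‖x j‖ ^ 2)
          - 2 * ∑ i, ∑ j, c i * c j * (inner ℝ (x i) (x j) : ℝ) := by
      rw [Finset.sum_mul_sum, Finset.sum_mul_sum, Finset.mul_sum]
      simp_rw [Finset.mul_sum, ← Finset.sum_add_distrib, ← Finset.sum_sub_distrib]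
      refine Finset.sum_congr rfl fun i _ => Finset.sum_congr rfl fun j _ => ?_
      rw [hr]
      ring
    rw [expand, hc, hinner]
    simp only [mul_zero, zero_mul, add_zero, zero_add]
    nlinarith [sq_nonneg ‖∑ i, c i • x i‖]
  · -- 0 < α < 2
    set b : ℝ := α / 2 with hb
    have hb0 : 0 < b := by positivity
    have hb1 : b < 1 := by rw [hb]; linarith
    set C : ℝ := ∫ s in Ioi (0:ℝ), (1 - Real.exp (-s)) * s ^ (-1 - b) with hC
    have hCpos : 0 < C := h_integral_pos hb0 hb1
    -- each ‖x i - x j‖ ^ α = (1/C) * J (‖x i - x j‖²)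
    have hpow : ∀ i j : ι, ‖x i - x j‖ ^ α
        = C⁻¹ * ∫ t in Ioi (0:ℝ), (1 - Real.exp (-(t * ‖x i - x j‖ ^ 2))) * t ^ (-1 - b) := by
      intro i j
      rw [J_scale hb0 hb1 (by positivity : (0:ℝ) ≤ ‖x i - x j‖ ^ 2), ← hC,
        ← Real.rpow_natCast ‖x i - x j‖ 2, ← Real.rpow_mul (norm_nonneg _)]
      rw [show ((2:ℕ):ℝ) * b = α by rw [hb]; ring]
      field_simp
    simp_rw [hpow]
    have hkey : ∑ i, ∑ j, c i * c j *
        (C⁻¹ * ∫ t in Ioi (0:ℝ), (1 - Real.exp (-(t * ‖x i - x j‖ ^ 2))) * t ^ (-1 - b))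
        = C⁻¹ * ∫ t in Ioi (0:ℝ),
            ∑ i, ∑ j, c i * c j * ((1 - Real.exp (-(t * ‖x i - x j‖ ^ 2))) * t ^ (-1 - b)) := by
      rw [integral_finset_sum _ (fun i _ => integrable_finset_sum _ (fun j _ =>
        ((J_integrable hb0 hb1 (by positivity : (0:ℝ) ≤ ‖x i - x j‖ ^ 2)).const_mul
          (c i * c j))))]
      rw [Finset.mul_sum]
      refine Finset.sum_congr rfl fun i _ => ?_
      rw [integral_finset_sum _ (fun j _ =>
        ((J_integrable hb0 hb1 (by positivity : (0:ℝ) ≤ ‖x i - x j‖ ^ 2)).const_mul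
          (c i * c j)))]
      rw [Finset.mul_sum]
      refine Finset.sum_congr rfl fun j _ => ?_
      rw [integral_const_mul]
      ring
    rw [hkey]
    refine mul_nonpos_of_nonneg_of_nonpos (by positivity) ?_
    refine integral_nonpos_of_ae ?_
    filter_upwards [ae_restrict_mem measurableSet_Ioi] with t ht
    have ht0 : (0:ℝ) < t := ht
    have : ∑ i, ∑ j, c i * c j * ((1 - Real.exp (-(t * ‖x i - x j‖ ^ 2))) * t ^ (-1 - b))
        = t ^ (-1 - b) * ((∑ i, c i) * (∑ j, c j)
            - ∑ i, ∑ j, c i * c j * Real.exp (-(t * ‖x i - x j‖ ^ 2))) := by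
      rw [Finset.sum_mul_sum]
      simp_rw [← Finset.sum_sub_distrib, Finset.mul_sum]
      exact Finset.sum_congr rfl fun i _ => Finset.sum_congr rfl fun j _ => by ring
    rw [this, hc]
    simp only [zero_mul, zero_sub]
    rw [mul_neg]
    exact neg_nonpos_of_nonneg (mul_nonneg (Real.rpow_nonneg ht0.le _)
      (gaussian_pd x c ht0.le))

end Aux3

open Finset

section Aux4
open Finset

lemma giniMean_symm {p : ℕ} {ι κ : Type*} [Fintype ι] [Fintype κ] (α : ℝ)
    (A : ι → EuclideanSpace ℝ (Fin p)) (B : κ → EuclideanSpace ℝ (Fin p)) :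
    giniMean α B A = giniMean α A B := by
  unfold giniMean
  rw [Finset.sum_comm, mul_comm ((Fintype.card κ : ℝ))]
  congr 1
  refine Finset.sum_congr rfl fun i _ => Finset.sum_congr rfl fun m _ => ?_
  rw [norm_sub_rev]

lemma energy_pair_nonneg {p : ℕ} {α : ℝ} (hα0 : 0 < α) (hα2 : α ≤ 2)
    {nj nk : ℕ} (hnj : 1 ≤ nj) (hnk : 1 ≤ nk)
    (Aj : Fin nj → EuclideanSpace ℝ (Fin p)) (Ak : Fin nk → EuclideanSpace ℝ (Fin p)) :
    0 ≤ 2 * giniMean α Aj Ak - giniMean α Aj Aj - giniMean α Ak Ak := by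
  have hnj0 : ((nj : ℝ)) ≠ 0 := Nat.cast_ne_zero.mpr (by omega)
  have hnk0 : ((nk : ℝ)) ≠ 0 := Nat.cast_ne_zero.mpr (by omega)
  have hsum : ∑ i : Fin nj ⊕ Fin nk,
      Sum.elim (fun _ : Fin nj => (nj : ℝ)⁻¹) (fun _ : Fin nk => -(nk : ℝ)⁻¹) i = 0 := by
    rw [Fintype.sum_sum_type]
    simp [Finset.sum_const, hnj0, hnk0]
  have key := cnd_rpow hα0 hα2 (Sum.elim Aj Ak)
    (Sum.elim (fun _ : Fin nj => (nj : ℝ)⁻¹) (fun _ : Fin nk => -(nk : ℝ)⁻¹)) hsum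
  simp only [Fintype.sum_sum_type, Sum.elim_inl, Sum.elim_inr] at key
  have blk : ∀ {m l : ℕ} (u v : ℝ) (f : Fin m → Fin l → ℝ),
      ∑ a, ∑ b, u * v * f a b = (u * v) * ∑ a, ∑ b, f a b := by
    intro m l u v f
    rw [Finset.mul_sum]
    exact Finset.sum_congr rfl fun a _ => by rw [Finset.mul_sum]
  rw [Finset.sum_add_distrib, Finset.sum_add_distrib] at key
  rw [blk, blk, blk, blk] at key
  have b1 : ((nj:ℝ)⁻¹ * (nj:ℝ)⁻¹) = 1 / ((nj:ℝ) * (nj:ℝ)) := by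
    rw [one_div, mul_inv]
  have b4 : (-(nk:ℝ)⁻¹ * -(nk:ℝ)⁻¹) = 1 / ((nk:ℝ) * (nk:ℝ)) := by
    rw [one_div, mul_inv]; ring
  have b2 : ((nj:ℝ)⁻¹ * -(nk:ℝ)⁻¹) = -(1 / ((nj:ℝ) * (nk:ℝ))) := by
    rw [one_div, mul_inv]; ring
  have b3 : (-(nk:ℝ)⁻¹ * (nj:ℝ)⁻¹) = -(1 / ((nk:ℝ) * (nj:ℝ))) := by
    rw [one_div, mul_inv]; ring
  rw [b1, b2, b3, b4] at key
  have gs := giniMean_symm α Aj Ak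
  unfold giniMean at gs ⊢
  simp only [Fintype.card_fin] at gs ⊢
  linarith

end Aux4

/-- Nonnegativity of the between-sample dispersion `S_α` for `0 < α ≤ 2`. -/
theorem between_sample_dispersion_nonneg
    (p K : ℕ) (α : ℝ) (hα0 : 0 < α) (hα2 : α ≤ 2)
    (n : Fin K → ℕ) (hn : ∀ j, 1 ≤ n j)
    (A : (j : Fin K) → Fin (n j) → EuclideanSpace ℝ (Fin p)) :
    0 ≤ ∑ j : Fin K, ∑ k : Fin K,
          if j < k then
            ((n j : ℝ) * (n k : ℝ) / (2 * ∑ l : Fin K, (n l : ℝ))) *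
              (2 * giniMean α (A j) (A k) - giniMean α (A j) (A j)
                - giniMean α (A k) (A k))
          else 0 := by
  refine Finset.sum_nonneg fun j _ => Finset.sum_nonneg fun k _ => ?_
  by_cases h : j < k
  · rw [if_pos h]
    refine mul_nonneg (div_nonneg (mul_nonneg (Nat.cast_nonneg _) (Nat.cast_nonneg _))
      (mul_nonneg (by norm_num) (Finset.sum_nonneg fun l _ => Nat.cast_nonneg _))) ?_
    exact energy_pair_nonneg hα0 hα2 (hn j) (hn k) (A j) (A k)
  · rw [if_neg h]
end

section
/- For univariate samples A₁,…,A_K, the α = 2 between-sample dispersion equals the ANOVA treatment sum of squares: S₂(A₁,…,A_K) = Σ_{j=1}^K n_j (ā_{·j} − ā_{··})², where ā_{·j} is the mean of sample j and ā_{··} is the grand mean of the pooled sample. -/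
open Finset

/-- The Gini mean of squared differences between two finite families of
real numbers. -/
noncomputable def giniMean2 {ι κ : Type*} [Fintype ι] [Fintype κ]
    (A : ι → ℝ) (B : κ → ℝ) : ℝ :=
  (1 / ((Fintype.card ι : ℝ) * (Fintype.card κ : ℝ))) *
    ∑ i : ι, ∑ m : κ, (A i - B m) ^ 2

lemma gini_expand {ι κ : Type*} [Fintype ι] [Fintype κ] (A : ι → ℝ) (B : κ → ℝ) :
    ∑ i : ι, ∑ m : κ, (A i - B m) ^ 2
      = (Fintype.card κ : ℝ) * ∑ i : ι, (A i) ^ 2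
        + (Fintype.card ι : ℝ) * ∑ m : κ, (B m) ^ 2
        - 2 * (∑ i : ι, A i) * (∑ m : κ, B m) := by
  have h : ∀ i : ι, ∑ m : κ, (A i - B m) ^ 2
      = (Fintype.card κ : ℝ) * (A i) ^ 2 - 2 * A i * (∑ m : κ, B m) + ∑ m : κ, (B m) ^ 2 := by
    intro i
    have : ∀ m : κ, (A i - B m) ^ 2 = (A i) ^ 2 - 2 * A i * B m + (B m) ^ 2 := by
      intro m; ring
    rw [Finset.sum_congr rfl fun m _ => this m]
    simp [Finset.sum_add_distrib, Finset.sum_sub_distrib, ← Finset.mul_sum, Finset.card_univ]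
  rw [Finset.sum_congr rfl fun i _ => h i]
  rw [Finset.sum_add_distrib, Finset.sum_sub_distrib, ← Finset.mul_sum,
    ← Finset.sum_mul, ← Finset.mul_sum]
  simp [Finset.card_univ]
  ring

lemma gini_combo {ι κ : Type*} [Fintype ι] [Fintype κ]
    (hι : (Fintype.card ι : ℝ) ≠ 0) (hκ : (Fintype.card κ : ℝ) ≠ 0)
    (A : ι → ℝ) (B : κ → ℝ) :
    2 * giniMean2 A B - giniMean2 A A - giniMean2 B B
      = 2 * ((∑ i : ι, A i) / (Fintype.card ι : ℝ)
            - (∑ m : κ, B m) / (Fintype.card κ : ℝ)) ^ 2 := by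
  unfold giniMean2
  rw [gini_expand, gini_expand, gini_expand]
  field_simp
  ring

lemma sum_pair_identity (K : ℕ) (hK : 0 < K) (ν m : Fin K → ℝ)
    (hν : ∀ j, 0 < ν j) :
    ∑ j : Fin K, ∑ k : Fin K,
        (if j < k then ν j * ν k * (m j - m k) ^ 2 / (∑ l : Fin K, ν l) else 0)
      = ∑ j : Fin K, ν j * (m j - (∑ k : Fin K, ν k * m k) / (∑ l : Fin K, ν l)) ^ 2 := by
  have hne : Nonempty (Fin K) := Fin.pos_iff_nonempty.mp hK
  set N := ∑ l : Fin K, ν l with hNdef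
  have hNpos : 0 < N := Finset.sum_pos (fun l _ => hν l) Finset.univ_nonempty
  have hNne : N ≠ 0 := hNpos.ne'
  set T := ∑ k : Fin K, ν k * m k with hTdef
  set P := ∑ k : Fin K, ν k * m k ^ 2 with hPdef
  set f : Fin K → Fin K → ℝ := fun j k => ν j * ν k * (m j - m k) ^ 2 / N with hfdef
  have key : ∀ j k : Fin K,
      (if j < k then f j k else 0) + (if k < j then f k j else 0) = f j k := by
    intro j k
    rcases lt_trichotomy j k with h | h | h
    · simp [h, asymm h]
    · subst h; simp [hfdef]
    · have h' : ¬ j < k := asymm h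
      simp only [h, h', if_true, if_false, zero_add]
      simp only [hfdef]
      ring
  have hdouble :
      (∑ j : Fin K, ∑ k : Fin K, (if j < k then f j k else 0))
        + (∑ j : Fin K, ∑ k : Fin K, (if j < k then f j k else 0))
      = ∑ j : Fin K, ∑ k : Fin K, f j k := by
    nth_rewrite 2 [Finset.sum_comm]
    rw [← Finset.sum_add_distrib]
    refine Finset.sum_congr rfl fun j _ => ?_
    rw [← Finset.sum_add_distrib]
    exact Finset.sum_congr rfl fun k _ => key j k
  have hrow : ∀ j : Fin K, ∑ k : Fin K, ν j * ν k * (m j - m k) ^ 2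
      = ν j * m j ^ 2 * N + ν j * P - 2 * (ν j * m j) * T := by
    intro j
    have h1 : ∀ k : Fin K, ν j * ν k * (m j - m k) ^ 2
        = ν j * m j ^ 2 * ν k + ν j * (ν k * m k ^ 2) - 2 * (ν j * m j) * (ν k * m k) := by
      intro k; ring
    rw [Finset.sum_congr rfl fun k _ => h1 k]
    rw [Finset.sum_sub_distrib, Finset.sum_add_distrib, ← Finset.mul_sum, ← Finset.mul_sum,
      ← Finset.mul_sum]
  have htot : ∑ j : Fin K, ∑ k : Fin K, f j k = (P * N + N * P - 2 * T * T) / N := by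
    simp only [hfdef]
    have hinner : ∀ j : Fin K, ∑ k : Fin K, ν j * ν k * (m j - m k) ^ 2 / N
        = ((ν j * m j ^ 2) * N + ν j * P - (ν j * m j) * (2 * T)) / N := by
      intro j
      rw [← Finset.sum_div, hrow j]
      ring_nf
    rw [Finset.sum_congr rfl fun j _ => hinner j, ← Finset.sum_div]
    congr 1
    rw [Finset.sum_sub_distrib, Finset.sum_add_distrib, ← Finset.sum_mul,
      ← Finset.sum_mul, ← Finset.sum_mul]
    simp only [← hPdef, ← hTdef, ← hNdef]
    ring
  have hrhs : ∑ j : Fin K, ν j * (m j - T / N) ^ 2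
      = P - 2 * T * (T / N) + N * (T / N) ^ 2 := by
    have h1 : ∀ j : Fin K, ν j * (m j - T / N) ^ 2
        = ν j * m j ^ 2 - (ν j * m j) * (2 * (T / N)) + ν j * (T / N) ^ 2 := by
      intro j; ring
    rw [Finset.sum_congr rfl fun j _ => h1 j]
    rw [Finset.sum_add_distrib, Finset.sum_sub_distrib, ← Finset.sum_mul, ← Finset.sum_mul]
    simp only [← hPdef, ← hTdef, ← hNdef]
    ring
  have hS : (∑ j : Fin K, ∑ k : Fin K, (if j < k then f j k else 0))
      = (P * N + N * P - 2 * T * T) / N / 2 := by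
    rw [← htot, ← hdouble]; ring
  rw [hS, hrhs]
  field_simp
  ring

/-- For univariate samples, the `α = 2` between-sample dispersion equals the
ANOVA treatment sum of squares `Σ_j n_j(ā_{·j} − ā_{··})²`. -/
theorem between_dispersion_alpha_two_eq_SST
    (K : ℕ) (n : Fin K → ℕ) (hn : ∀ j, 1 ≤ n j)
    (a : (j : Fin K) → Fin (n j) → ℝ) :
    (∑ j : Fin K, ∑ k : Fin K,
        if j < k then
          ((n j : ℝ) * (n k : ℝ) / (2 * ∑ l : Fin K, (n l : ℝ))) *
            (2 * giniMean2 (a j) (a k) - giniMean2 (a j) (a j)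
              - giniMean2 (a k) (a k))
        else 0)
      = ∑ j : Fin K, (n j : ℝ) *
          ((∑ i : Fin (n j), a j i) / (n j : ℝ)
            - (∑ k : Fin K, (n k : ℝ) * ((∑ i : Fin (n k), a k i) / (n k : ℝ)))
                / (∑ l : Fin K, (n l : ℝ))) ^ 2 := by
  rcases Nat.eq_zero_or_pos K with hK | hK
  · subst hK; simp
  have hνpos : ∀ j, (0 : ℝ) < (n j : ℝ) := fun j => by exact_mod_cast hn j
  have hνne : ∀ j, ((n j : ℝ)) ≠ 0 := fun j => (hνpos j).ne'
  have hne : Nonempty (Fin K) := Fin.pos_iff_nonempty.mp hK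
  have hNpos : (0 : ℝ) < ∑ l : Fin K, (n l : ℝ) :=
    Finset.sum_pos (fun l _ => hνpos l) Finset.univ_nonempty
  have hNne := hNpos.ne'
  have hpair : ∀ j k : Fin K,
      (if j < k then
          ((n j : ℝ) * (n k : ℝ) / (2 * ∑ l : Fin K, (n l : ℝ))) *
            (2 * giniMean2 (a j) (a k) - giniMean2 (a j) (a j)
              - giniMean2 (a k) (a k))
        else 0)
      = (if j < k then
          (n j : ℝ) * (n k : ℝ) *
            ((∑ i : Fin (n j), a j i) / (n j : ℝ)
              - (∑ i : Fin (n k), a k i) / (n k : ℝ)) ^ 2 / (∑ l : Fin K, (n l : ℝ))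
        else 0) := by
    intro j k
    split_ifs with h
    · have h1 : (Fintype.card (Fin (n j)) : ℝ) ≠ 0 := by
        simpa [Fintype.card_fin] using hνne j
      have h2 : (Fintype.card (Fin (n k)) : ℝ) ≠ 0 := by
        simpa [Fintype.card_fin] using hνne k
      rw [gini_combo h1 h2]
      simp only [Fintype.card_fin]
      field_simp
    · rfl
  calc (∑ j : Fin K, ∑ k : Fin K,
        if j < k then
          ((n j : ℝ) * (n k : ℝ) / (2 * ∑ l : Fin K, (n l : ℝ))) *
            (2 * giniMean2 (a j) (a k) - giniMean2 (a j) (a j)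
              - giniMean2 (a k) (a k))
        else 0)
      = ∑ j : Fin K, ∑ k : Fin K,
          (if j < k then
            (n j : ℝ) * (n k : ℝ) *
              ((∑ i : Fin (n j), a j i) / (n j : ℝ)
                - (∑ i : Fin (n k), a k i) / (n k : ℝ)) ^ 2 / (∑ l : Fin K, (n l : ℝ))
          else 0) :=
        Finset.sum_congr rfl fun j _ => Finset.sum_congr rfl fun k _ => hpair j k
    _ = _ :=
        sum_pair_identity K hK (fun j => (n j : ℝ))
          (fun j => (∑ i : Fin (n j), a j i) / (n j : ℝ)) hνpos
end
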